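/- arXiv:1807.00158 — 7 statements merged into one kernel-verified Lean document; each statement's English description precedes it below -/
import Mathlib

section
/- Let φ : A → B be a homomorphism of commutative rings such that Spec(B) → Spec(A) is a universal homeomorphism, i.e. φ is integral, the induced map on prime spectra is bijective, and for every prime q ⊂ B the residue field extension κ(φ⁻¹(q)) ⊆ κ(q) is purely inseparable. Let C ⊆ B be an A-subalgebra. Then both induced maps Spec(B) → Spec(C) and Spec(C) → Spec(A) are universal homeomorphisms in the same sense: B is integral over C and C is integral over A, both induced maps on prime spectra are bijective, and all residue field extensions are purely inseparable. -/
/-!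
STATEMENT 0: If `φ : A → B` is a uh-morphism (integral, bijective on prime spectra,
purely inseparable residue field extensions) and `C ⊆ B` is an `A`-subalgebra, then
both `Spec(B) → Spec(C)` and `Spec(C) → Spec(A)` are universal homeomorphisms in
the same sense.
-/

open IsLocalRing in
/-- The induced map on residue fields at a prime `q ⊆ B` and its preimage `φ⁻¹(q) ⊆ A`. -/
noncomputable def residueFieldHom {A B : Type*} [CommRing A] [CommRing B] (φ : A →+* B)
    (q : Ideal B) [q.IsPrime] :
    ResidueField (Localization.AtPrime (q.comap φ)) →+* ResidueField (Localization.AtPrime q) :=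
  letI := Localization.isLocalHom_localRingHom (q.comap φ) q φ rfl
  ResidueField.map (Localization.localRingHom (q.comap φ) q φ rfl)

/-- `φ` induces purely inseparable residue field extensions at every prime. -/
def RingHom.PurelyInseparableResidues {A B : Type*} [CommRing A] [CommRing B] (φ : A →+* B) : Prop :=
  ∀ (q : Ideal B) (_ : q.IsPrime),
    letI := ‹q.IsPrime›
    letI := (residueFieldHom φ q).toAlgebra
    IsPurelyInseparable (IsLocalRing.ResidueField (Localization.AtPrime (q.comap φ)))
      (IsLocalRing.ResidueField (Localization.AtPrime q))

/-- `Spec(B) → Spec(A)` is a universal homeomorphism: `φ` is integral, the induced map on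
prime spectra is bijective, and all residue field extensions are purely inseparable. -/
def RingHom.IsUhMorphism {A B : Type*} [CommRing A] [CommRing B] (φ : A →+* B) : Prop :=
  φ.IsIntegral ∧ Function.Bijective (PrimeSpectrum.comap φ) ∧ φ.PurelyInseparableResidues

open IsLocalRing in
lemma residueFieldHom_comp {A B C : Type*} [CommRing A] [CommRing B] [CommRing C]
    (f : A →+* B) (g : B →+* C) (q : Ideal C) [q.IsPrime] :
    residueFieldHom (g.comp f) q =
      (residueFieldHom g q).comp (residueFieldHom f (q.comap g)) := by
  letI := Localization.isLocalHom_localRingHom (q.comap g) q g rfl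
  letI := Localization.isLocalHom_localRingHom ((q.comap g).comap f) (q.comap g) f rfl
  letI := Localization.isLocalHom_localRingHom (q.comap (g.comp f)) q (g.comp f) rfl
  apply RingHom.ext
  intro x
  obtain ⟨a, rfl⟩ := IsLocalRing.residue_surjective x
  simp only [residueFieldHom, RingHom.comp_apply, ResidueField.map_residue]
  exact congrArg (IsLocalRing.residue _) (DFunLike.congr_fun
    (Localization.localRingHom_comp ((q.comap g).comap f) (q.comap g) q f rfl g rfl) a)

theorem uh_factors_through_subalgebra {A B : Type*} [CommRing A] [CommRing B] [Algebra A B]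
    (huh : (algebraMap A B).IsUhMorphism) (C : Subalgebra A B) :
    (C.val.toRingHom).IsUhMorphism ∧ (algebraMap A C).IsUhMorphism := by
  obtain ⟨hint, hbij, hres⟩ := huh
  set ψ : C →+* B := C.val.toRingHom with hψ
  set ι : A →+* C := algebraMap A C with hι
  have hcomp : (algebraMap A B) = ψ.comp ι := rfl
  -- integrality
  have hψint : ψ.IsIntegral := RingHom.IsIntegral.tower_top ι ψ (hcomp ▸ hint)
  have hψinj : Function.Injective ψ := Subtype.val_injective
  have hιint : ι.IsIntegral := RingHom.IsIntegral.tower_bot ι ψ hψinj (hcomp ▸ hint)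
  haveI : Algebra.IsIntegral ↥C B := ⟨fun x => hψint x⟩
  have hlift : ∀ (p : Ideal C) (_ : p.IsPrime), ∃ Q : Ideal B, Q.IsPrime ∧ Q.comap ψ = p := by
    intro p hp
    obtain ⟨Q, -, hQp, hQc⟩ := Ideal.exists_ideal_over_prime_of_isIntegral p
      (⊥ : Ideal B) (by
        intro x hx
        have h0 : ψ x = 0 := by simp at hx; simp [hx]
        have : x = 0 := hψinj (by simpa using h0)
        simp [this])
    exact ⟨Q, hQp, hQc⟩
  -- spectra
  have hspec : (PrimeSpectrum.comap (algebraMap A B)) =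
      (PrimeSpectrum.comap ι) ∘ (PrimeSpectrum.comap ψ) := by
    rw [hcomp, PrimeSpectrum.comap_comp]
  rw [hspec] at hbij
  have hψspec_inj : Function.Injective (PrimeSpectrum.comap ψ) :=
    Function.Injective.of_comp hbij.1
  have hψspec_surj : Function.Surjective (PrimeSpectrum.comap ψ) := by
    intro p
    obtain ⟨Q, hQp, hQc⟩ := hlift p.asIdeal p.isPrime
    exact ⟨⟨Q, hQp⟩, PrimeSpectrum.ext hQc⟩
  have hιspec_surj : Function.Surjective (PrimeSpectrum.comap ι) :=
    Function.Surjective.of_comp hbij.2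
  have hιspec_inj : Function.Injective (PrimeSpectrum.comap ι) := by
    intro x y hxy
    obtain ⟨x', rfl⟩ := hψspec_surj x
    obtain ⟨y', rfl⟩ := hψspec_surj y
    rw [hbij.1 hxy]
  -- residues
  have hψres : ψ.PurelyInseparableResidues := by
    intro q hq
    letI := hq
    letI algPQ : Algebra (IsLocalRing.ResidueField (Localization.AtPrime (q.comap ψ)))
        (IsLocalRing.ResidueField (Localization.AtPrime q)) := (residueFieldHom ψ q).toAlgebra
    letI algRP : Algebra
        (IsLocalRing.ResidueField (Localization.AtPrime (q.comap (algebraMap A B))))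
        (IsLocalRing.ResidueField (Localization.AtPrime (q.comap ψ))) :=
      (residueFieldHom ι (q.comap ψ)).toAlgebra
    letI algRQ : Algebra
        (IsLocalRing.ResidueField (Localization.AtPrime (q.comap (algebraMap A B))))
        (IsLocalRing.ResidueField (Localization.AtPrime q)) :=
      (residueFieldHom (algebraMap A B) q).toAlgebra
    haveI : IsScalarTower
        (IsLocalRing.ResidueField (Localization.AtPrime (q.comap (algebraMap A B))))
        (IsLocalRing.ResidueField (Localization.AtPrime (q.comap ψ)))
        (IsLocalRing.ResidueField (Localization.AtPrime q)) :=
      IsScalarTower.of_algebraMap_eq'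
        (show residueFieldHom (algebraMap A B) q =
            (residueFieldHom ψ q).comp (residueFieldHom ι (q.comap ψ)) from
          residueFieldHom_comp ι ψ q)
    haveI := hres q hq
    exact IsPurelyInseparable.tower_top
      (IsLocalRing.ResidueField (Localization.AtPrime (q.comap (algebraMap A B)))) _ _
  have hιres : ι.PurelyInseparableResidues := by
    intro p hp
    letI := hp
    obtain ⟨Q, hQp, hQc⟩ := hlift p hp
    haveI := hQp
    subst hQc
    letI algPQ : Algebra (IsLocalRing.ResidueField (Localization.AtPrime (Q.comap ψ)))
        (IsLocalRing.ResidueField (Localization.AtPrime Q)) := (residueFieldHom ψ Q).toAlgebra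
    letI algRP : Algebra
        (IsLocalRing.ResidueField (Localization.AtPrime (Q.comap (algebraMap A B))))
        (IsLocalRing.ResidueField (Localization.AtPrime (Q.comap ψ))) :=
      (residueFieldHom ι (Q.comap ψ)).toAlgebra
    letI algRQ : Algebra
        (IsLocalRing.ResidueField (Localization.AtPrime (Q.comap (algebraMap A B))))
        (IsLocalRing.ResidueField (Localization.AtPrime Q)) :=
      (residueFieldHom (algebraMap A B) Q).toAlgebra
    haveI : IsScalarTower
        (IsLocalRing.ResidueField (Localization.AtPrime (Q.comap (algebraMap A B))))
        (IsLocalRing.ResidueField (Localization.AtPrime (Q.comap ψ)))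
        (IsLocalRing.ResidueField (Localization.AtPrime Q)) :=
      IsScalarTower.of_algebraMap_eq'
        (show residueFieldHom (algebraMap A B) Q =
            (residueFieldHom ψ Q).comp (residueFieldHom ι (Q.comap ψ)) from
          residueFieldHom_comp ι ψ Q)
    haveI := hres Q hQp
    exact IsPurelyInseparable.tower_bot
      (IsLocalRing.ResidueField (Localization.AtPrime (Q.comap (algebraMap A B)))) _
      (IsLocalRing.ResidueField (Localization.AtPrime Q))
  exact ⟨⟨hψint, ⟨hψspec_inj, hψspec_surj⟩, hψres⟩,
    ⟨hιint, ⟨hιspec_inj, hιspec_surj⟩, hιres⟩⟩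
end

section
/- Let f : Y → X be a separated morphism of schemes which is injective on underlying topological spaces and such that for every y ∈ Y the residue field extension κ(f(y)) ⊆ κ(y) is purely inseparable (for example, f a separated universal homeomorphism). Then for every reduced scheme T and every pair of morphisms t, t' : T → Y with f ∘ t = f ∘ t', one has t = t'. -/
/-!
STATEMENT 2: A separated morphism of schemes which is injective on points with purely
inseparable residue field extensions is a monomorphism on reduced test schemes.
-/

open AlgebraicGeometry CategoryTheory CategoryTheory.Limits

lemma aux_spec_hom_ext' {Y X : AlgebraicGeometry.Scheme.{u_1}} (f : Y ⟶ X)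
    (hinj : Function.Injective f.base)
    (hpi : ∀ y : Y, letI := (f.residueFieldMap y).hom.toAlgebra;
      IsPurelyInseparable (X.residueField (f.base y)) (Y.residueField y))
    {K : Type u_1} [Field K] (y₁ y₂ : Y)
    (φ₁ : Y.residueField y₁ ⟶ .of K) (φ₂ : Y.residueField y₂ ⟶ .of K)
    (hc : (Spec.map φ₁ ≫ Y.fromSpecResidueField y₁) ≫ f =
      (Spec.map φ₂ ≫ Y.fromSpecResidueField y₂) ≫ f) :
    Spec.map φ₁ ≫ Y.fromSpecResidueField y₁ = Spec.map φ₂ ≫ Y.fromSpecResidueField y₂ := by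
  have h₁ : (Spec.map φ₁ ≫ Y.fromSpecResidueField y₁) ≫ f =
      Spec.map (f.residueFieldMap y₁ ≫ φ₁) ≫ X.fromSpecResidueField (f.base y₁) := by
    simp only [Spec.map_comp, Category.assoc,
      Scheme.Hom.SpecMap_residueFieldMap_fromSpecResidueField]
  have h₂ : (Spec.map φ₂ ≫ Y.fromSpecResidueField y₂) ≫ f =
      Spec.map (f.residueFieldMap y₂ ≫ φ₂) ≫ X.fromSpecResidueField (f.base y₂) := by
    simp only [Spec.map_comp, Category.assoc,
      Scheme.Hom.SpecMap_residueFieldMap_fromSpecResidueField]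
  have key : (⟨f.base y₁, f.residueFieldMap y₁ ≫ φ₁⟩ :
        Σ x : X, X.residueField x ⟶ .of K) = ⟨f.base y₂, f.residueFieldMap y₂ ≫ φ₂⟩ :=
    (Scheme.SpecToEquivOfField K X).symm.injective (h₁.symm.trans (hc.trans h₂))
  rw [Scheme.SpecToEquivOfField_eq_iff] at key
  obtain ⟨e, hφ⟩ := key
  have ey : y₁ = y₂ := hinj e
  subst ey
  rw [show (X.residueFieldCongr e) = Iso.refl _ from Scheme.residueFieldCongr_refl,
    Iso.refl_hom, Category.id_comp] at hφ
  letI := (f.residueFieldMap y₁).hom.toAlgebra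
  haveI := hpi y₁
  have hφeq : φ₁ = φ₂ := by
    apply CommRingCat.hom_ext
    apply IsPurelyInseparable.injective_comp_algebraMap
      (X.residueField (f.base y₁)) (Y.residueField y₁) K
    rw [RingHom.algebraMap_toAlgebra]
    exact congrArg CommRingCat.Hom.hom hφ
  rw [hφeq]

/-- Two morphisms from the spectrum of a field agreeing after composition with `f` are equal,
when `f` is injective with purely inseparable residue field extensions. -/
lemma aux_spec_hom_ext {Y X : AlgebraicGeometry.Scheme.{u_1}} (f : Y ⟶ X)
    (hinj : Function.Injective f.base)
    (hpi : ∀ y : Y, letI := (f.residueFieldMap y).hom.toAlgebra;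
      IsPurelyInseparable (X.residueField (f.base y)) (Y.residueField y))
    {K : Type u_1} [Field K] (a b : AlgebraicGeometry.Spec (.of K) ⟶ Y)
    (hab : a ≫ f = b ≫ f) : a = b := by
  have ha := Scheme.descResidueField_stalkClosedPointTo_fromSpecResidueField K Y a
  have hb := Scheme.descResidueField_stalkClosedPointTo_fromSpecResidueField K Y b
  rw [← ha, ← hb]
  apply aux_spec_hom_ext' f hinj hpi
  exact (congrArg (fun m => m ≫ f) ha).trans (hab.trans (congrArg (fun m => m ≫ f) hb).symm)

theorem eq_of_comp_eq_of_injective_of_purelyInseparable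
    {Y X : AlgebraicGeometry.Scheme} (f : Y ⟶ X) [AlgebraicGeometry.IsSeparated f]
    (hinj : Function.Injective f.base)
    (hpi : ∀ y : Y, letI := (f.residueFieldMap y).hom.toAlgebra;
      IsPurelyInseparable (X.residueField (f.base y)) (Y.residueField y))
    (T : AlgebraicGeometry.Scheme) [AlgebraicGeometry.IsReduced T]
    (t t' : T ⟶ Y) (h : t ≫ f = t' ≫ f) : t = t' := by
  -- Step 1: the diagonal of `f` is surjective.
  have hdsurj : AlgebraicGeometry.Surjective (pullback.diagonal f) := by
    constructor
    intro z
    set P := pullback f f with hP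
    set w := P.fromSpecResidueField z with hw'
    have hcond : (w ≫ pullback.fst f f) ≫ f = (w ≫ pullback.snd f f) ≫ f := by
      simp only [Category.assoc, pullback.condition]
    have hs : w ≫ pullback.fst f f = w ≫ pullback.snd f f :=
      aux_spec_hom_ext f hinj hpi _ _ hcond
    have hw : w = (w ≫ pullback.fst f f) ≫ pullback.diagonal f := by
      apply pullback.hom_ext
      · simp
      · simp [hs]
    refine ⟨(w ≫ pullback.fst f f).base (IsLocalRing.closedPoint _), ?_⟩
    have : ((w ≫ pullback.fst f f) ≫ pullback.diagonal f).base
        (IsLocalRing.closedPoint _) = z := by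
      rw [← hw]; exact P.fromSpecResidueField_apply z _
    exact this
  -- Step 2: pull back the diagonal (a surjective closed immersion) along `(t, t')`.
  set g : T ⟶ pullback f f := pullback.lift t t' h with hg'
  haveI : IsClosedImmersion (pullback.fst g (pullback.diagonal f)) :=
    MorphismProperty.IsStableUnderBaseChange.of_isPullback (IsPullback.of_hasPullback _ _).flip inferInstance
  haveI : AlgebraicGeometry.Surjective (pullback.fst g (pullback.diagonal f)) :=
    MorphismProperty.IsStableUnderBaseChange.of_isPullback (IsPullback.of_hasPullback _ _).flip hdsurj
  haveI := isIso_of_isClosedImmersion_of_surjective (pullback.fst g (pullback.diagonal f))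
  have hg : g = inv (pullback.fst g (pullback.diagonal f)) ≫
      pullback.snd g (pullback.diagonal f) ≫ pullback.diagonal f := by
    rw [← pullback.condition, IsIso.inv_hom_id_assoc]
  have ht : t = inv (pullback.fst g (pullback.diagonal f)) ≫
      pullback.snd g (pullback.diagonal f) := by
    rw [show t = g ≫ pullback.fst f f from (pullback.lift_fst _ _ _).symm]
    conv_lhs => rw [hg]
    simp
  have ht' : t' = inv (pullback.fst g (pullback.diagonal f)) ≫
      pullback.snd g (pullback.diagonal f) := by
    rw [show t' = g ≫ pullback.snd f f from (pullback.lift_snd _ _ _).symm]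
    conv_lhs => rw [hg]
    simp
  rw [ht, ht']
end

section
/- Let R be a henselian valuation ring of characteristic p > 0 with fraction field K, let K ⊆ K' be a purely inseparable extension of fields, and let R' be the integral closure of R in K'. Then R' is a valuation ring with fraction field K', the extension R ⊆ R' is integral, the induced map Spec(R') → Spec(R) is bijective, and for every prime q ⊂ R' the residue field extension κ(q ∩ R) ⊆ κ(q) is purely inseparable; that is, Spec(R') → Spec(R) is a universal homeomorphism. -/
set_option linter.unusedSectionVars false in
section
variable (p : ℕ) (hp : p.Prime)
    {R : Type*} [CommRing R] [IsDomain R] [ValuationRing R] [CharP R p]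
    {K' : Type*} [Field K'] [Algebra (FractionRing R) K']
    [IsPurelyInseparable (FractionRing R) K']
    [Algebra R K'] [IsScalarTower R (FractionRing R) K']


include hp in
theorem UH4aux_mem_intClosure_iff (x : K') :
    x ∈ integralClosure R K' ↔ ∃ (n : ℕ) (r : R), algebraMap R K' r = x ^ p ^ n := by
  haveI : ExpChar (FractionRing R) p := ExpChar.prime hp
  constructor
  · intro hx
    obtain ⟨n, y, hy⟩ := IsPurelyInseparable.pow_mem (FractionRing R) p x
    have hyint : IsIntegral R y := by
      rw [← isIntegral_algebraMap_iff (B := K')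
        (algebraMap (FractionRing R) K' |>.injective), hy]
      exact hx.pow _
    obtain ⟨r, hr⟩ := IsIntegrallyClosed.isIntegral_iff.mp hyint
    exact ⟨n, r, by rw [IsScalarTower.algebraMap_apply R (FractionRing R) K', hr, hy]⟩
  · rintro ⟨n, r, hr⟩
    refine ⟨Polynomial.X ^ p ^ n - Polynomial.C r,
      Polynomial.monic_X_pow_sub_C r (pow_ne_zero n hp.ne_zero), ?_⟩
    simp [sub_eq_zero, hr.symm]
end

section
variable (p : ℕ) (hp : p.Prime)
    {R : Type*} [CommRing R] [IsDomain R] [ValuationRing R] [CharP R p]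
    {K' : Type*} [Field K'] [Algebra (FractionRing R) K']
    [IsPurelyInseparable (FractionRing R) K']
    [Algebra R K'] [IsScalarTower R (FractionRing R) K']

include hp in
theorem UH4aux_mem_or_inv_mem (x : K') :
    x ∈ integralClosure R K' ∨ x⁻¹ ∈ integralClosure R K' := by
  haveI : ExpChar (FractionRing R) p := ExpChar.prime hp
  by_cases hx : x = 0
  · left; simp [hx, Subalgebra.zero_mem]
  obtain ⟨n, y, hy⟩ := IsPurelyInseparable.pow_mem (FractionRing R) p x
  rcases ValuationRing.isInteger_or_isInteger R y with ⟨r, hr⟩ | ⟨r, hr⟩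
  · left
    rw [UH4aux_mem_intClosure_iff p hp]
    exact ⟨n, r, by rw [IsScalarTower.algebraMap_apply R (FractionRing R) K', hr, hy]⟩
  · right
    rw [UH4aux_mem_intClosure_iff p hp]
    refine ⟨n, r, ?_⟩
    rw [IsScalarTower.algebraMap_apply R (FractionRing R) K', hr, inv_pow, ← hy, map_inv₀]

include hp in
theorem UH4aux_valRing : ValuationRing (integralClosure R K') := by
  suffices h : PreValuationRing (integralClosure R K') from @ValuationRing.mk _ _ _ h
  refine ⟨fun a b => ?_⟩
  by_cases hb : b = 0
  · exact ⟨0, Or.inl (by simp [hb])⟩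
  by_cases ha : a = 0
  · exact ⟨0, Or.inr (by simp [ha])⟩
  have hbK : (b : K') ≠ 0 := fun h => hb (Subtype.ext h)
  have haK : (a : K') ≠ 0 := fun h => ha (Subtype.ext h)
  rcases UH4aux_mem_or_inv_mem p hp (R := R) ((a : K') / b) with h | h
  · refine ⟨⟨_, h⟩, Or.inr ?_⟩
    ext
    push_cast
    field_simp
  · rw [show ((a : K') / b)⁻¹ = (b : K') / a by rw [inv_div]] at h
    refine ⟨⟨_, h⟩, Or.inl ?_⟩
    ext
    push_cast
    field_simp

include hp in
theorem UH4aux_isFracRing : IsFractionRing (integralClosure R K') K' where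
  map_units := fun ⟨y, hy⟩ =>
    (Units.mk0 (y : K') fun c => nonZeroDivisors.ne_zero hy <| Subtype.ext c).isUnit
  surj z := by
    by_cases h : z = 0; · exact ⟨(0, 1), by simp [h]⟩
    rcases UH4aux_mem_or_inv_mem p hp (R := R) z with hh | hh
    · exact ⟨(⟨z, hh⟩, 1), by simp⟩
    · refine ⟨⟨1, ⟨⟨_, hh⟩, ?_⟩⟩, ?_⟩
      · exact mem_nonZeroDivisors_iff_ne_zero.2 fun c => h (inv_eq_zero.mp
          (congr_arg Subtype.val c))
      · exact mul_inv_cancel₀ h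
  exists_of_eq {a b} h := ⟨1, by simp [Subtype.ext (h : (a : K') = b)]⟩
end

section
variable (p : ℕ) (hp : p.Prime)
    {R : Type*} [CommRing R] [IsDomain R] [ValuationRing R] [CharP R p]
    {K' : Type*} [Field K'] [Algebra (FractionRing R) K']
    [IsPurelyInseparable (FractionRing R) K']
    [Algebra R K'] [IsScalarTower R (FractionRing R) K']

theorem UH4aux_charP_resField {A : Type*} [CommRing A] [IsLocalRing A]
    (hA : ((p : ℕ) : A) = 0) (hp : p.Prime) :
    CharP (IsLocalRing.ResidueField A) p := by
  refine (CharP.charP_iff_prime_eq_zero hp).mpr ?_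
  rw [← map_natCast (IsLocalRing.residue A), hA, map_zero]

include hp in
theorem UH4aux_inj : Function.Injective (algebraMap R (integralClosure R K')) := by
  have h1 : Function.Injective (algebraMap R K') := by
    rw [IsScalarTower.algebraMap_eq R (FractionRing R) K']
    exact (algebraMap (FractionRing R) K').injective.comp (IsFractionRing.injective _ _)
  intro x y h
  exact h1 (by
    rw [IsScalarTower.algebraMap_apply R (integralClosure R K') K',
      IsScalarTower.algebraMap_apply R (integralClosure R K') K', h])

include hp in
theorem UH4aux_uh : RingHom.IsUhMorphism (algebraMap R (integralClosure R K')) := by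
  set S := integralClosure R K' with hS
  set φ := algebraMap R S with hφ
  have key : ∀ (x : S) (n : ℕ), ∃ (m : ℕ) (r : R), n ≤ m ∧ φ r = x ^ p ^ m := by
    intro x n
    obtain ⟨n1, r1, h1⟩ := (UH4aux_mem_intClosure_iff p hp (R := R) (x : K')).mp x.2
    refine ⟨max n n1, r1 ^ p ^ (max n n1 - n1), le_max_left _ _, ?_⟩
    apply Subtype.ext
    have e1 : ((φ (r1 ^ p ^ (max n n1 - n1)) : S) : K')
        = algebraMap R K' (r1 ^ p ^ (max n n1 - n1)) :=
      (IsScalarTower.algebraMap_apply R S K' _).symm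
    have e2 : ((x ^ p ^ (max n n1) : S) : K') = (x : K') ^ p ^ (max n n1) := by
      push_cast; rfl
    rw [e1, e2, map_pow, h1, ← pow_mul, ← pow_add, Nat.add_sub_cancel' (le_max_right n n1)]
  have hmem : ∀ (q1 q2 : Ideal S), q1.IsPrime → q2.IsPrime →
      q1.comap φ = q2.comap φ → q1 ≤ q2 := by
    intro q1 q2 hq1 hq2 hcomap x hx
    obtain ⟨m, r, -, hr⟩ := key x 0
    have hrq1 : r ∈ q1.comap φ := by
      simp only [Ideal.mem_comap, hr]
      exact Ideal.pow_mem_of_mem q1 hx _ (pow_pos hp.pos m)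
    rw [hcomap] at hrq1
    have : x ^ p ^ m ∈ q2 := by rw [← hr]; exact hrq1
    exact hq2.mem_of_pow_mem _ this
  refine ⟨fun x => IsIntegralClosure.isIntegral R K' x, ⟨?_, ?_⟩, ?_⟩
  · -- injective
    intro x y h
    ext : 1
    refine le_antisymm (hmem _ _ x.2 y.2 ?_) (hmem _ _ y.2 x.2 ?_) <;>
      · have := congr_arg PrimeSpectrum.asIdeal h
        simp only [PrimeSpectrum.comap_asIdeal] at this
        first | exact this | exact this.symm
  · -- surjective
    intro P
    have hker : RingHom.ker φ ≤ P.asIdeal := by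
      rw [(RingHom.injective_iff_ker_eq_bot φ).mp (UH4aux_inj p hp)]
      exact bot_le
    obtain ⟨Q, hQ, hQP⟩ :=
      Ideal.exists_ideal_over_prime_of_isIntegral_of_isDomain P.asIdeal hker
    exact ⟨⟨Q, hQ⟩, PrimeSpectrum.ext hQP⟩
  · -- residues
    intro q hq
    letI := hq
    letI := (residueFieldHom φ q).toAlgebra
    haveI hqP : (q.comap φ).IsPrime := Ideal.comap_isPrime φ q
    have hcast : ∀ (A : Type _) [CommRing A], ∀ (f : R →+* A), ((p : ℕ) : A) = 0 := by
      intro A _ f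
      rw [← map_natCast f, CharP.cast_eq_zero, map_zero]
    haveI cF : CharP (IsLocalRing.ResidueField (Localization.AtPrime (q.comap φ))) p :=
      UH4aux_charP_resField p (hcast _ ((algebraMap R (Localization.AtPrime (q.comap φ))))) hp
    haveI : ExpChar (IsLocalRing.ResidueField (Localization.AtPrime (q.comap φ))) p :=
      ExpChar.prime hp
    rw [isPurelyInseparable_iff_pow_mem _ p]
    intro z
    obtain ⟨y, hy⟩ := Ideal.Quotient.mk_surjective z
    obtain ⟨⟨x, s⟩, hxs⟩ := IsLocalization.mk'_surjective q.primeCompl y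
    have hxs : IsLocalization.mk' (Localization.AtPrime q) x s = y := hxs
    obtain ⟨m1, r1, -, hr1⟩ := key x 0
    obtain ⟨m, r2, hm, hr2⟩ := key (s : S) m1
    -- upgrade r1 to exponent m
    have hr1' : φ (r1 ^ p ^ (m - m1)) = x ^ p ^ m := by
      rw [map_pow, hr1, ← pow_mul, ← pow_add, Nat.add_sub_cancel' hm]
    set a := r1 ^ p ^ (m - m1) with ha
    have hb : r2 ∈ (q.comap φ).primeCompl := by
      intro hmem2
      rw [SetLike.mem_coe, Ideal.mem_comap, hr2] at hmem2
      exact s.2 (hq.mem_of_pow_mem _ hmem2)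
    refine ⟨m, IsLocalRing.residue _
      (IsLocalization.mk' (Localization.AtPrime (q.comap φ)) a ⟨r2, hb⟩), ?_⟩
    have hlift : Localization.localRingHom (q.comap φ) q φ rfl
        (IsLocalization.mk' (Localization.AtPrime (q.comap φ)) a ⟨r2, hb⟩)
        = IsLocalization.mk' (Localization.AtPrime q) (x ^ p ^ m)
          (⟨(s : S) ^ p ^ m, pow_mem s.2 _⟩ : q.primeCompl) := by
      rw [Localization.localRingHom_mk', hr1']
      congr 1
      exact Subtype.ext hr2
    show residueFieldHom φ q (IsLocalRing.residue _
      (IsLocalization.mk' (Localization.AtPrime (q.comap φ)) a ⟨r2, hb⟩)) = z ^ p ^ m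
    have h3 : residueFieldHom φ q (IsLocalRing.residue _
        (IsLocalization.mk' (Localization.AtPrime (q.comap φ)) a ⟨r2, hb⟩))
        = IsLocalRing.residue _ (Localization.localRingHom (q.comap φ) q φ rfl
          (IsLocalization.mk' (Localization.AtPrime (q.comap φ)) a ⟨r2, hb⟩)) := rfl
    have h4 : (Ideal.Quotient.mk (IsLocalRing.maximalIdeal (Localization.AtPrime q)))
          (IsLocalization.mk' (Localization.AtPrime q) x s) ^ p ^ m
        = (Ideal.Quotient.mk (IsLocalRing.maximalIdeal (Localization.AtPrime q)))
          ((IsLocalization.mk' (Localization.AtPrime q) x s) ^ p ^ m) :=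
      (map_pow _ _ _).symm
    have h5 : IsLocalization.mk' (Localization.AtPrime q) (x ^ p ^ m)
        (⟨(s : S) ^ p ^ m, pow_mem s.2 _⟩ : q.primeCompl)
        = IsLocalization.mk' (Localization.AtPrime q) x s ^ p ^ m :=
      IsLocalization.mk'_pow _ _ _
    rw [h3, hlift, ← hy, ← hxs, h5]
    exact map_pow _ _ _
end


theorem integralClosure_in_purelyInseparable_of_henselian_valuation_ring
    (p : ℕ) (hp : p.Prime)
    {R : Type*} [CommRing R] [IsDomain R] [ValuationRing R] [HenselianLocalRing R] [CharP R p]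
    {K' : Type*} [Field K'] [Algebra (FractionRing R) K']
    [IsPurelyInseparable (FractionRing R) K']
    [Algebra R K'] [IsScalarTower R (FractionRing R) K'] :
    IsDomain (integralClosure R K') ∧
    ValuationRing (integralClosure R K') ∧
    IsFractionRing (integralClosure R K') K' ∧
    RingHom.IsUhMorphism (algebraMap R (integralClosure R K')) := by
  exact ⟨inferInstance, UH4aux_valRing p hp, UH4aux_isFracRing p hp, UH4aux_uh p hp⟩
end

section
/- Let A → B be a ring homomorphism, let C be a pseudo-integral closure of A in B, and let C' be an A-subalgebra with C ⊆ C' ⊆ B^ic which is finitely generated as an A-algebra. Then C' is also a pseudo-integral closure of A in B. -/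
/-- A pseudo-integral closure of `A` in `B`: an `A`-subalgebra `C` of the integral closure
`B^ic` of `A` in `B` which is finitely generated as an `A`-module and such that
`Spec(B^ic) → Spec(C)` is a bijection inducing isomorphisms on all residue fields. -/
def IsPseudoIntegralClosure {A B : Type*} [CommRing A] [CommRing B] [Algebra A B]
    (C : Subalgebra A B) : Prop :=
  ∃ hle : C ≤ integralClosure A B,
    Module.Finite A C ∧
    Function.Bijective (PrimeSpectrum.comap (Subalgebra.inclusion hle).toRingHom) ∧
    ∀ (q : Ideal (integralClosure A B)) (_ : q.IsPrime),
      letI := ‹q.IsPrime›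
      Function.Bijective (residueFieldHom (Subalgebra.inclusion hle).toRingHom q)

theorem isPseudoIntegralClosure_of_le_of_fg {A B : Type*} [CommRing A] [CommRing B]
    [Algebra A B] {C C' : Subalgebra A B} (hC : IsPseudoIntegralClosure C)
    (hCC' : C ≤ C') (hC' : C' ≤ integralClosure A B) (hfg : C'.FG) :
    IsPseudoIntegralClosure C' := by
  obtain ⟨hle, hfin, hbij, hres⟩ := hC
  -- ring hom factorization
  set f : C →+* C' := (Subalgebra.inclusion hCC').toRingHom with hf
  set g : C' →+* (integralClosure A B) := (Subalgebra.inclusion hC').toRingHom with hg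
  have hcomp : (Subalgebra.inclusion hle).toRingHom = g.comp f := by
    ext x; rfl
  -- integrality of the inclusion C' → B^ic
  letI : Algebra C' (integralClosure A B) := g.toAlgebra
  haveI : IsScalarTower A C' (integralClosure A B) :=
    IsScalarTower.of_algebraMap_eq fun x => rfl
  haveI : Algebra.IsIntegral C' (integralClosure A B) :=
    ⟨fun x => (Algebra.IsIntegral.isIntegral (R := A) x).tower_top⟩
  refine ⟨hC', ?_, ?_, ?_⟩
  · -- Module.Finite A C'
    obtain ⟨s, hs⟩ := hfg
    have : (Subalgebra.toSubmodule C').FG := by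
      rw [← hs]
      exact fg_adjoin_of_finite s.finite_toSet fun x hx =>
        hC' (hs ▸ Algebra.subset_adjoin hx)
    exact Module.Finite.iff_fg.mpr this
  · constructor
    · have := hbij.1
      rw [hcomp, PrimeSpectrum.comap_comp] at this
      exact Function.Injective.of_comp this
    · intro p
      obtain ⟨Q, _, hQp, hQ⟩ := Ideal.exists_ideal_over_prime_of_isIntegral
        (R := C') (S := integralClosure A B) p.asIdeal ⊥
        (by
          intro x hx
          have h0 : g x = 0 := Ideal.mem_bot.mp (Ideal.mem_comap.mp hx)
          have hx0 : x = 0 := Subalgebra.inclusion_injective hC'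
            (h0.trans (map_zero _).symm)
          rw [hx0]; exact p.asIdeal.zero_mem)
      exact ⟨⟨Q, hQp⟩, PrimeSpectrum.ext hQ⟩
  · intro q hq
    letI := hq
    have hb := hres q hq
    rw [show residueFieldHom (Subalgebra.inclusion hle).toRingHom q =
        (residueFieldHom g q).comp (residueFieldHom f (q.comap g)) from
      residueFieldHom_comp f g q] at hb
    constructor
    · exact (residueFieldHom g q).injective
    · have := hb.2
      erw [RingHom.coe_comp] at this
      exact this.of_comp
end

section
/- Let K be a field, l a prime number, and A a nonzero K-algebra which is finite-dimensional as a K-vector space with l ∤ dim_K A. Then A has a maximal ideal m such that A/m is a finite field extension of K whose degree [A/m : K] is prime to l. -/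
/-!
STATEMENT 11: A nonzero finite-dimensional commutative algebra `A` over a field `K` with
`l ∤ dim_K A` has a maximal ideal `m` such that `A/m` is a finite field extension of `K`
of degree prime to `l`.
-/

open Module

lemma residue_dvd_finrank_of_torsion {K A : Type*} [Field K] [CommRing A] [Algebra K A]
    [FiniteDimensional K A] (m I : Ideal A) (hm : m.IsMaximal)
    (hkill : ∀ a ∈ m, ∀ y ∈ I, a * y = 0) :
    Module.finrank K (A ⧸ m) ∣ Module.finrank K (I.restrictScalars K) := by
  letI : Field (A ⧸ m) := Ideal.Quotient.field m
  have htor : Module.IsTorsionBySet A I (m : Set A) := by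
    intro y a
    ext
    exact hkill a a.2 y y.2
  letI : Module (A ⧸ m) I := htor.module
  haveI : IsScalarTower K (A ⧸ m) I := htor.isScalarTower
  exact ⟨Module.finrank (A ⧸ m) I, (Module.finrank_mul_finrank K (A ⧸ m) I).symm⟩

lemma aux_exists_max {K : Type u} [Field K] (l : ℕ) (hl : l.Prime) :
    ∀ n : ℕ, ∀ (A : Type v) (_ : CommRing A) (_ : Nontrivial A) (_ : Algebra K A)
      (_ : FiniteDimensional K A), Module.finrank K A = n → ¬ l ∣ n →
      ∃ m : Ideal A, m.IsMaximal ∧ FiniteDimensional K (A ⧸ m) ∧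
        ¬ l ∣ Module.finrank K (A ⧸ m) := by
  intro n
  induction n using Nat.strong_induction_on with
  | _ n ih =>
  intro A _ _ _ _ hn hld
  haveI : IsArtinianRing A := isArtinian_of_tower K inferInstance
  haveI : IsNoetherianRing A := isNoetherian_of_tower K inferInstance
  obtain ⟨m, hmp'⟩ := associatedPrimes.nonempty A A
  obtain ⟨hmp, x, hx⟩ := isAssociatedPrime_iff.mp hmp'
  haveI : m.IsPrime := hmp
  have hmmax : m.IsMaximal := IsArtinianRing.isMaximal_of_isPrime m
  by_cases hres : ¬ l ∣ Module.finrank K (A ⧸ m)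
  · exact ⟨m, hmmax, inferInstance, hres⟩
  push_neg at hres
  -- x ≠ 0 since m ≠ ⊤
  have hx0 : x ≠ 0 := by
    rintro rfl
    have h1 : (1 : A) ∈ m := by rw [hx, Submodule.mem_colon_singleton]; simp
    exact hmp.ne_top ((Ideal.eq_top_iff_one _).mpr h1)
  set I : Ideal A := Ideal.span {x} with hI
  have hspan : (A ∙ x) = I := rfl
  have hkill : ∀ a ∈ m, ∀ y ∈ I, a * y = 0 := by
    intro a ha y hy
    rw [hI, Ideal.mem_span_singleton] at hy
    obtain ⟨c, rfl⟩ := hy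
    have : a • x = 0 := by
      have := hx ▸ ha
      rw [Submodule.mem_colon_singleton] at this
      simpa using this
    rw [smul_eq_mul] at this
    rw [← mul_assoc, this, zero_mul]
  -- I ≠ ⊤
  have hItop : I ≠ ⊤ := by
    intro htop
    have h1 : (1 : A) ∈ I := htop ▸ Submodule.mem_top
    have := hkill
    -- every a ∈ m kills 1, so m = ⊥
    have hmbot : m = ⊥ := by
      ext a
      simp only [Ideal.mem_bot]
      constructor
      · intro ha
        have := hkill a ha 1 h1
        simpa using this
      · rintro rfl; exact m.zero_mem
    -- then A ⧸ m ≃ A, contradicting hld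
    have : Module.finrank K (A ⧸ m) = n := by
      rw [hmbot, ← hn]
      have e : (A ⧸ (⊥ : Ideal A)) ≃ₐ[K] A :=
        { RingEquiv.quotientBot A with commutes' := fun k => rfl }
      exact e.toLinearEquiv.finrank_eq
    exact hld (this ▸ hres)
  -- l ∣ dim I
  have hdvdI : l ∣ Module.finrank K (I.restrictScalars K) :=
    hres.trans (residue_dvd_finrank_of_torsion m I hmmax hkill)
  -- dim I > 0
  have hIpos : 0 < Module.finrank K (I.restrictScalars K) := by
    have : Nontrivial (I.restrictScalars K) := by
      refine ⟨⟨⟨x, ?_⟩, 0, ?_⟩⟩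
      · exact Ideal.subset_span rfl
      · simp [Subtype.ext_iff, hx0]
    exact Module.finrank_pos
  -- dim A = dim (A/I) + dim I
  have hsum : Module.finrank K (A ⧸ I) + Module.finrank K (I.restrictScalars K) = n := by
    rw [← hn, ← (Submodule.Quotient.restrictScalarsEquiv K I).finrank_eq]
    exact Submodule.finrank_quotient_add_finrank _
  haveI : Nontrivial (A ⧸ I) := Ideal.Quotient.nontrivial_iff.mpr hItop
  have hlt : Module.finrank K (A ⧸ I) < n := by omega
  have hnd : ¬ l ∣ Module.finrank K (A ⧸ I) := by
    intro h
    exact hld (hsum ▸ Nat.dvd_add h hdvdI)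
  obtain ⟨mbar, hmbar, _, hmbarnd⟩ := ih _ hlt (A ⧸ I) inferInstance inferInstance inferInstance inferInstance rfl hnd
  -- pull back
  refine ⟨mbar.comap (Ideal.Quotient.mk I), ?_, ?_, ?_⟩
  · exact Ideal.comap_isMaximal_of_surjective _ Ideal.Quotient.mk_surjective
  all_goals {
    have hfs : Function.Surjective
        ((Ideal.Quotient.mkₐ K mbar).comp (Ideal.Quotient.mkₐ K I)) := by
      intro b
      obtain ⟨c, rfl⟩ := Ideal.Quotient.mk_surjective b
      obtain ⟨a, rfl⟩ := Ideal.Quotient.mk_surjective c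
      exact ⟨a, rfl⟩
    have e := Ideal.quotientKerAlgEquivOfSurjective hfs
    have hker : RingHom.ker ((Ideal.Quotient.mkₐ K mbar).comp (Ideal.Quotient.mkₐ K I))
        = mbar.comap (Ideal.Quotient.mk I) := by
      ext a
      simp [RingHom.mem_ker, Ideal.Quotient.eq_zero_iff_mem]
    replace e := (Ideal.quotientEquivAlgOfEq K hker).symm.trans e
    first
    | exact Module.Finite.equiv e.toLinearEquiv.symm
    | { rw [e.toLinearEquiv.finrank_eq]; exact hmbarnd }
  }

theorem exists_maximal_ideal_residue_degree_prime_to_l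
    {K A : Type*} [Field K] [CommRing A] [Nontrivial A] [Algebra K A]
    [FiniteDimensional K A] (l : ℕ) (hl : l.Prime)
    (hld : ¬ l ∣ Module.finrank K A) :
    ∃ m : Ideal A, m.IsMaximal ∧ FiniteDimensional K (A ⧸ m) ∧
      ¬ l ∣ Module.finrank K (A ⧸ m) := by
  exact aux_exists_max l hl (Module.finrank K A) A ‹_› ‹_› ‹_› ‹_› rfl hld
end

section
/- Let (A_λ)_{λ ∈ Λ} be a filtered system of commutative rings with colimit A, and let B be an A-algebra which is free of finite rank n as an A-module, admitting an A-module basis whose first element is the unit 1 of B. Then there exist an index λ ∈ Λ and an A_λ-algebra B_λ which is free of rank n as an A_λ-module, together with an isomorphism of A-algebras A ⊗_{A_λ} B_λ ≅ B. -/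
/-!
STATEMENT 14: A finite free algebra (with a basis starting with 1) over a filtered colimit
of rings descends to a finite free algebra over some stage of the system.
-/

open scoped TensorProduct

universe u v

/-- A packaged `R`-algebra. -/
structure AlgebraPkg (R : Type u) [CommRing R] : Type (u + 1) where
  carrier : Type u
  [commRing : CommRing carrier]
  [algebra : Algebra R carrier]

attribute [instance] AlgebraPkg.commRing AlgebraPkg.algebra

section SC
variable {R : Type u} [CommRing R] {n : ℕ}

private lemma sum_reorder3 {M : Type*} [AddCommMonoid M] (F : Fin n → Fin n → Fin n → M) :
    ∑ m, ∑ j, ∑ k, F j k m = ∑ j, ∑ k, ∑ m, F j k m := by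
  rw [Finset.sum_comm]
  exact Finset.sum_congr rfl fun j _ => Finset.sum_comm

private lemma sum_reorder4 {M : Type*} [AddCommMonoid M] (F : Fin n → Fin n → Fin n → Fin n → M) :
    ∑ p, ∑ k, ∑ i, ∑ j, F i j k p = ∑ i, ∑ j, ∑ k, ∑ p, F i j k p :=
  calc ∑ p, ∑ k, ∑ i, ∑ j, F i j k p
      = ∑ k, ∑ p, ∑ i, ∑ j, F i j k p := Finset.sum_comm
    _ = ∑ k, ∑ i, ∑ p, ∑ j, F i j k p :=
        Finset.sum_congr rfl fun k _ => Finset.sum_comm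
    _ = ∑ k, ∑ i, ∑ j, ∑ p, F i j k p :=
        Finset.sum_congr rfl fun k _ => Finset.sum_congr rfl fun i _ => Finset.sum_comm
    _ = ∑ i, ∑ k, ∑ j, ∑ p, F i j k p := Finset.sum_comm
    _ = ∑ i, ∑ j, ∑ k, ∑ p, F i j k p :=
        Finset.sum_congr rfl fun i _ => Finset.sum_comm

/-- Type synonym carrying a structure-constant algebra. -/
def SCarrier (R : Type u) (n : ℕ) (d : Fin n → Fin n → Fin n → R) : Type u := Fin n → R

namespace SCarrier

variable {d : Fin n → Fin n → Fin n → R}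

instance : AddCommGroup (SCarrier R n d) := inferInstanceAs (AddCommGroup (Fin n → R))
instance : Module R (SCarrier R n d) := inferInstanceAs (Module R (Fin n → R))

/-- The basis of the structure-constant algebra. -/
noncomputable def basis (R : Type u) [CommRing R] (n : ℕ) (d : Fin n → Fin n → Fin n → R) :
    Module.Basis (Fin n) R (SCarrier R n d) :=
  Module.Basis.ofEquivFun (LinearEquiv.refl R (Fin n → R) : SCarrier R n d ≃ₗ[R] (Fin n → R))

theorem basis_apply (l m : Fin n) : basis R n d l m = if m = l then (1 : R) else 0 := by
  classical
  have h : ⇑(basis R n d) = fun i => (LinearEquiv.refl R (Fin n → R)).symm (Pi.single i 1) :=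
    Module.Basis.coe_ofEquivFun _
  rw [show basis R n d l = (LinearEquiv.refl R (Fin n → R)).symm (Pi.single l 1)
    from congrFun h l]
  simp [Pi.single_apply]

variable (hn : 0 < n)
  (hcomm : ∀ i j l, d i j l = d j i l)
  (hassoc : ∀ i j k l, ∑ p, d i j p * d p k l = ∑ m, d j k m * d i m l)
  (hunit : ∀ j l, d ⟨0, hn⟩ j l = if j = l then 1 else 0)

def scMul (x y : SCarrier R n d) : SCarrier R n d :=
  fun l => ∑ i, ∑ j, x i * y j * d i j l

def scOne (hn : 0 < n) : SCarrier R n d := fun l => if l = ⟨0, hn⟩ then 1 else 0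

include hcomm in
theorem scMul_comm (x y : SCarrier R n d) : scMul x y = scMul y x := by
  funext l
  unfold scMul
  rw [Finset.sum_comm]
  refine Finset.sum_congr rfl fun j _ => Finset.sum_congr rfl fun i _ => ?_
  rw [hcomm j i l]; ring

include hassoc in
theorem scMul_assoc (x y z : SCarrier R n d) :
    scMul (scMul x y) z = scMul x (scMul y z) := by
  funext l
  show ∑ p, ∑ k, (∑ i, ∑ j, x i * y j * d i j p) * z k * d p k l
      = ∑ i, ∑ m, x i * (∑ j, ∑ k, y j * z k * d j k m) * d i m l
  calc ∑ p, ∑ k, (∑ i, ∑ j, x i * y j * d i j p) * z k * d p k l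
      = ∑ p, ∑ k, ∑ i, ∑ j, x i * y j * z k * (d i j p * d p k l) := by
        refine Finset.sum_congr rfl fun p _ => Finset.sum_congr rfl fun k _ => ?_
        rw [Finset.sum_mul, Finset.sum_mul]
        refine Finset.sum_congr rfl fun i _ => ?_
        rw [Finset.sum_mul, Finset.sum_mul]
        exact Finset.sum_congr rfl fun j _ => by ring
    _ = ∑ i, ∑ j, ∑ k, ∑ p, x i * y j * z k * (d i j p * d p k l) :=
        sum_reorder4 _
    _ = ∑ i, ∑ j, ∑ k, x i * y j * z k * ∑ p, d i j p * d p k l := by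
        refine Finset.sum_congr rfl fun i _ => Finset.sum_congr rfl fun j _ =>
          Finset.sum_congr rfl fun k _ => ?_
        rw [Finset.mul_sum]
    _ = ∑ i, ∑ j, ∑ k, ∑ m, x i * y j * z k * (d j k m * d i m l) := by
        refine Finset.sum_congr rfl fun i _ => Finset.sum_congr rfl fun j _ =>
          Finset.sum_congr rfl fun k _ => ?_
        rw [hassoc, Finset.mul_sum]
    _ = ∑ i, ∑ m, ∑ j, ∑ k, x i * y j * z k * (d j k m * d i m l) := by
        refine Finset.sum_congr rfl fun i _ => ?_
        exact (sum_reorder3 _).symm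
    _ = ∑ i, ∑ m, x i * (∑ j, ∑ k, y j * z k * d j k m) * d i m l := by
        refine Finset.sum_congr rfl fun i _ => Finset.sum_congr rfl fun m _ => ?_
        rw [Finset.mul_sum, Finset.sum_mul]
        refine Finset.sum_congr rfl fun j _ => ?_
        rw [Finset.mul_sum, Finset.sum_mul]
        exact Finset.sum_congr rfl fun k _ => by ring

include hunit in
theorem scOne_mul (y : SCarrier R n d) : scMul (scOne hn) y = y := by
  funext l
  show (∑ i, ∑ j, (if i = ⟨0, hn⟩ then (1:R) else 0) * y j * d i j l) = y l
  rw [Finset.sum_eq_single (⟨0, hn⟩ : Fin n)]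
  · simp only [if_pos rfl, one_mul, hunit]
    rw [Finset.sum_eq_single l] <;> simp +contextual
  · intro i _ hi; simp [hi]
  · simp

@[reducible]
def scCommRing : CommRing (SCarrier R n d) :=
  { (inferInstance : AddCommGroup (SCarrier R n d)) with
    mul := scMul
    one := scOne hn
    left_distrib := fun x y z => by
      show scMul x (y + z) = scMul x y + scMul x z
      funext l
      show (∑ i, ∑ j, x i * (y j + z j) * d i j l) = _
      simp only [mul_add, add_mul, Finset.sum_add_distrib]
      rfl
    right_distrib := fun x y z => by
      show scMul (x + y) z = scMul x z + scMul y z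
      funext l
      show (∑ i, ∑ j, (x i + y i) * z j * d i j l) = _
      simp only [mul_add, add_mul, Finset.sum_add_distrib]
      rfl
    zero_mul := fun x => by
      show scMul 0 x = 0
      funext l
      show (∑ i, ∑ j, (0:R) * x j * d i j l) = 0
      simp
    mul_zero := fun x => by
      show scMul x 0 = 0
      funext l
      show (∑ i, ∑ j, x i * (0:R) * d i j l) = 0
      simp
    mul_assoc := scMul_assoc hassoc
    one_mul := scOne_mul hn hunit
    mul_one := fun x => (scMul_comm hcomm x (scOne hn)).trans (scOne_mul hn hunit x)
    mul_comm := scMul_comm hcomm }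

include hcomm in
theorem scMul_smul (r : R) (x y : SCarrier R n d) :
    scMul (r • x) y = r • scMul x y := by
  funext l
  show (∑ i, ∑ j, (r * x i) * y j * d i j l) = r * ∑ i, ∑ j, x i * y j * d i j l
  rw [Finset.mul_sum]
  exact Finset.sum_congr rfl fun i _ => by rw [Finset.mul_sum]; exact Finset.sum_congr rfl fun j _ => by ring

@[reducible]
noncomputable def scAlgebra : @Algebra R (SCarrier R n d) _
    (scCommRing hn hcomm hassoc hunit).toSemiring :=
  letI := scCommRing hn hcomm hassoc hunit
  Algebra.ofModule
    (fun r x y => scMul_smul hcomm r x y)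
    (fun r x y => by
      show scMul x (r • y) = r • scMul x y
      rw [scMul_comm hcomm, scMul_smul hcomm, scMul_comm hcomm])

end SCarrier
end SC

theorem finite_free_algebra_descends_along_filtered_colimit
    {ι : Type v} [Preorder ι] [IsDirected ι (· ≤ ·)] [Nonempty ι]
    (Aι : ι → Type u) [∀ i, CommRing (Aι i)]
    (f : ∀ i j, i ≤ j → Aι i →+* Aι j)
    (hf_id : ∀ i x, f i i le_rfl x = x)
    (hf_comp : ∀ i j k (hij : i ≤ j) (hjk : j ≤ k) x,
      f j k hjk (f i j hij x) = f i k (hij.trans hjk) x)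
    {A : Type u} [CommRing A] (g : ∀ i, Aι i →+* A)
    (hg : ∀ i j (hij : i ≤ j) x, g j (f i j hij x) = g i x)
    (hsurj : ∀ a : A, ∃ i x, g i x = a)
    (hexact : ∀ i x y, g i x = g i y → ∃ j, ∃ hij : i ≤ j, f i j hij x = f i j hij y)
    {B : Type u} [CommRing B] [Algebra A B]
    (n : ℕ) (hn : 0 < n) (b : Module.Basis (Fin n) A B) (hb : b ⟨0, hn⟩ = 1) :
    ∃ (i : ι) (P : AlgebraPkg (Aι i)) (_ : Module.Basis (Fin n) (Aι i) P.carrier),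
      Nonempty (letI := (g i).toAlgebra; (A ⊗[Aι i] P.carrier) ≃ₐ[A] B) := by
  classical
  set z : Fin n := ⟨0, hn⟩ with hz
  -- structure constants over A
  set c : Fin n → Fin n → Fin n → A := fun i j l => b.repr (b i * b j) l with hc
  have expand : ∀ i j, b i * b j = ∑ l, c i j l • b l := fun i j => (b.sum_repr _).symm
  -- relations over A
  have hAcomm : ∀ i j l, c i j l = c j i l := by
    intro i j l; simp [hc, mul_comm]
  have hAunit : ∀ j l, c z j l = if j = l then 1 else 0 := by
    intro j l
    simp only [hc, hz, hb, one_mul, Module.Basis.repr_self]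
    rw [← hz, hb, one_mul, Module.Basis.repr_self]
    exact Finsupp.single_apply
  have hAassoc : ∀ i j k l, ∑ p, c i j p * c p k l = ∑ m, c j k m * c i m l := by
    intro i j k l
    have h1 : b.repr ((b i * b j) * b k) l = ∑ p, c i j p * c p k l := by
      rw [expand i j, Finset.sum_mul]
      simp only [smul_mul_assoc, map_sum, map_smul, Finsupp.coe_finset_sum,
        Finset.sum_apply, Finsupp.coe_smul, Pi.smul_apply, smul_eq_mul]
      rfl
    have h2 : b.repr (b i * (b j * b k)) l = ∑ m, c j k m * c i m l := by
      rw [expand j k, Finset.mul_sum]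
      simp only [mul_smul_comm, map_sum, map_smul, Finsupp.coe_finset_sum,
        Finset.sum_apply, Finsupp.coe_smul, Pi.smul_apply, smul_eq_mul]
      rfl
    rw [← h1, ← h2, mul_assoc]
  -- lift the structure constants to a stage i0
  have lift : ∀ t : Fin n × Fin n × Fin n, ∃ i x, g i x = c t.1 t.2.1 t.2.2 :=
    fun t => hsurj _
  choose idx e he using lift
  obtain ⟨i0, hi0⟩ := Finite.exists_le idx
  set c0 : Fin n → Fin n → Fin n → Aι i0 :=
    fun i j l => f (idx (i, j, l)) i0 (hi0 _) (e (i, j, l)) with hc0def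
  have hc0 : ∀ i j l, g i0 (c0 i j l) = c i j l := by
    intro i j l; rw [hc0def]; dsimp only; rw [hg]; exact he (i, j, l)
  -- relations hold after pushing to a later stage j1
  -- encode the finitely many relations
  set T : Type := (Fin n × Fin n × Fin n) ⊕ (Fin n × Fin n × Fin n × Fin n) ⊕ (Fin n × Fin n)
    with hT
  set X : T → Aι i0 := fun t => match t with
    | .inl (i, j, l) => c0 i j l
    | .inr (.inl (i, j, k, l)) => ∑ p, c0 i j p * c0 p k l
    | .inr (.inr (j, l)) => c0 z j l
    with hX
  set Y : T → Aι i0 := fun t => match t with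
    | .inl (i, j, l) => c0 j i l
    | .inr (.inl (i, j, k, l)) => ∑ m, c0 j k m * c0 i m l
    | .inr (.inr (j, l)) => if j = l then 1 else 0
    with hY
  have hXY : ∀ t, g i0 (X t) = g i0 (Y t) := by
    rintro (⟨i, j, l⟩ | ⟨i, j, k, l⟩ | ⟨j, l⟩) <;>
      simp only [hX, hY, map_sum, map_mul, hc0, apply_ite (g i0), map_one, map_zero]
    · exact hAcomm i j l
    · exact hAassoc i j k l
    · exact hAunit j l
  choose jj hjj heq using fun t => hexact i0 (X t) (Y t) (hXY t)
  obtain ⟨j1, hj1⟩ := Finite.exists_le (Sum.elim jj (fun _ : PUnit.{1} => i0))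
  have h01 : i0 ≤ j1 := hj1 (.inr .unit)
  have heq1 : ∀ t, f i0 j1 h01 (X t) = f i0 j1 h01 (Y t) := by
    intro t
    have h2 : jj t ≤ j1 := hj1 (.inl t)
    have := congrArg (f (jj t) j1 h2) (heq t)
    rwa [hf_comp, hf_comp] at this
  set R := Aι j1 with hR
  set d : Fin n → Fin n → Fin n → R := fun i j l => f i0 j1 h01 (c0 i j l) with hd
  have hgd : ∀ i j l, g j1 (d i j l) = c i j l := by
    intro i j l; rw [hd]; dsimp only; rw [hg]; exact hc0 i j l
  have hdcomm : ∀ i j l, d i j l = d j i l := fun i j l => heq1 (.inl (i, j, l))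
  have hdassoc : ∀ i j k l, ∑ p, d i j p * d p k l = ∑ m, d j k m * d i m l := by
    intro i j k l
    have := heq1 (.inr (.inl (i, j, k, l)))
    simpa only [hX, hY, map_sum, map_mul] using this
  have hdunit : ∀ j l, d z j l = if j = l then 1 else 0 := by
    intro j l
    have := heq1 (.inr (.inr (j, l)))
    simpa only [hX, hY, apply_ite (f i0 j1 h01), map_one, map_zero] using this
  -- build the structure-constant algebra over R = Aι j1
  letI : CommRing (SCarrier R n d) := SCarrier.scCommRing hn hdcomm hdassoc hdunit
  letI : Algebra R (SCarrier R n d) := SCarrier.scAlgebra hn hdcomm hdassoc hdunit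
  letI : Algebra R A := (g j1).toAlgebra
  letI : Algebra R B := ((algebraMap A B).comp (g j1)).toAlgebra
  haveI : IsScalarTower R A B := IsScalarTower.of_algebraMap_eq fun _ => rfl
  -- the algebra map to B
  have mul_def : ∀ x y : SCarrier R n d, x * y = SCarrier.scMul x y := fun _ _ => rfl
  have one_def : (1 : SCarrier R n d) = SCarrier.scOne hn := rfl
  set φ₀ : SCarrier R n d → B := fun x => ∑ l, g j1 (x l) • b l with hφ₀
  have φ₀_mul : ∀ x y, φ₀ (x * y) = φ₀ x * φ₀ y := by
    intro x y
    rw [mul_def]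
    calc φ₀ (SCarrier.scMul x y)
        = ∑ l, ∑ i, ∑ j, (g j1 (x i) * g j1 (y j) * c i j l) • b l := by
          rw [hφ₀]
          refine Finset.sum_congr rfl fun l _ => ?_
          show (g j1 (∑ i, ∑ j, x i * y j * d i j l)) • b l = _
          rw [map_sum, Finset.sum_smul]
          refine Finset.sum_congr rfl fun i _ => ?_
          rw [map_sum, Finset.sum_smul]
          refine Finset.sum_congr rfl fun j _ => ?_
          rw [map_mul, map_mul, hgd]
      _ = ∑ i, ∑ j, ∑ l, (g j1 (x i) * g j1 (y j) * c i j l) • b l := sum_reorder3 _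
      _ = φ₀ x * φ₀ y := by
          rw [hφ₀]
          dsimp only
          rw [Finset.sum_mul]
          refine Finset.sum_congr rfl fun i _ => ?_
          rw [Finset.mul_sum]
          refine Finset.sum_congr rfl fun j _ => ?_
          rw [smul_mul_assoc, mul_smul_comm, expand i j, Finset.smul_sum, Finset.smul_sum]
          refine Finset.sum_congr rfl fun l _ => ?_
          rw [smul_smul, smul_smul, mul_assoc]
  have φ₀_one : φ₀ 1 = 1 := by
    rw [one_def, hφ₀]
    dsimp only
    rw [Finset.sum_eq_single z]
    · show g j1 (if z = z then 1 else 0) • b z = 1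
      rw [if_pos rfl, map_one, one_smul, hb]
    · intro l _ hl
      show g j1 (if l = z then 1 else 0) • b l = 0
      rw [if_neg hl, map_zero, zero_smul]
    · simp
  set φ : SCarrier R n d →ₐ[R] B :=
    { toFun := φ₀
      map_one' := φ₀_one
      map_mul' := φ₀_mul
      map_zero' := by
        show (∑ l, g j1 ((0 : SCarrier R n d) l) • b l) = 0
        exact Finset.sum_eq_zero fun l _ => by
          rw [show (0 : SCarrier R n d) l = 0 from rfl, map_zero, zero_smul]
      map_add' := by
        intro x y
        show (∑ l, g j1 ((x + y) l) • b l)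
          = (∑ l, g j1 (x l) • b l) + ∑ l, g j1 (y l) • b l
        rw [← Finset.sum_add_distrib]
        refine Finset.sum_congr rfl fun l _ => ?_
        rw [show (x + y) l = x l + y l from rfl, map_add, add_smul]
      commutes' := by
        intro r
        show φ₀ (r • (1 : SCarrier R n d)) = algebraMap R B r
        rw [one_def, hφ₀]
        dsimp only
        rw [Finset.sum_eq_single z]
        · show g j1 (r * (if z = z then 1 else 0)) • b z = _
          rw [if_pos rfl, mul_one, hb]
          show g j1 r • (1 : B) = algebraMap A B (g j1 r)
          rw [Algebra.smul_def, mul_one]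
        · intro l _ hl
          show g j1 (r * (if l = z then 1 else 0)) • b l = 0
          rw [if_neg hl, mul_zero, map_zero, zero_smul]
        · simp } with hφ
  -- lift to the tensor product
  set Ψ : (A ⊗[R] SCarrier R n d) →ₐ[A] B :=
    Algebra.TensorProduct.lift (Algebra.ofId A B) φ (fun x y => Commute.all _ _) with hΨ
  -- Ψ maps the basis to b
  set tb : Module.Basis (Fin n) A (A ⊗[R] SCarrier R n d) :=
    Algebra.TensorProduct.basis A (SCarrier.basis R n d) with htb
  have key : ∀ l, Ψ (tb l) = b l := by
    intro l
    rw [htb, Algebra.TensorProduct.basis_apply, hΨ, Algebra.TensorProduct.lift_tmul,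
      map_one, one_mul, hφ]
    show φ₀ (SCarrier.basis R n d l) = b l
    rw [hφ₀]
    dsimp only
    rw [Finset.sum_eq_single l]
    · rw [SCarrier.basis_apply, if_pos rfl, map_one, one_smul]
    · intro m _ hm
      rw [SCarrier.basis_apply, if_neg hm, map_zero, zero_smul]
    · simp
  have hbij : Function.Bijective Ψ := by
    have heq : Ψ.toLinearMap = (tb.equiv b (Equiv.refl _)).toLinearMap := by
      refine tb.ext fun l => ?_
      rw [LinearEquiv.coe_toLinearMap, Module.Basis.equiv_apply, Equiv.refl_apply]
      exact key l
    have hfun : ⇑Ψ = ⇑(tb.equiv b (Equiv.refl _)) := by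
      have h2 := congrArg (fun ψ : _ →ₗ[A] B => ⇑ψ) heq
      simpa using h2
    rw [hfun]
    exact (tb.equiv b (Equiv.refl _)).bijective
  exact ⟨j1, ⟨SCarrier R n d⟩, SCarrier.basis R n d, ⟨AlgEquiv.ofBijective Ψ hbij⟩⟩
end

section
/- Let R be a valuation ring and f : Y → Spec(R) a proper morphism of schemes which is completely decomposed. Then f admits a section, i.e. there is a morphism s : Spec(R) → Y with f ∘ s = id. -/
/-!
STATEMENT 15: A proper completely decomposed morphism onto the spectrum of a valuation
ring admits a section.
-/

open AlgebraicGeometry CategoryTheory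

/-- A morphism of schemes is completely decomposed if every point of the target lifts to a
point of the source with isomorphic residue field. -/
def AlgebraicGeometry.Scheme.Hom.CompletelyDecomposed {Y X : AlgebraicGeometry.Scheme}
    (f : Y ⟶ X) : Prop :=
  ∀ x : X, ∃ y : Y, f.base y = x ∧ Function.Bijective (f.residueFieldMap y)

theorem proper_completelyDecomposed_over_valuationRing_has_section
    {R : Type} [CommRing R] [IsDomain R] [ValuationRing R]
    {Y : AlgebraicGeometry.Scheme} (f : Y ⟶ AlgebraicGeometry.Spec (CommRingCat.of R))
    [AlgebraicGeometry.IsProper f]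
    (hcd : AlgebraicGeometry.Scheme.Hom.CompletelyDecomposed f) :
    ∃ s : AlgebraicGeometry.Spec (CommRingCat.of R) ⟶ Y, s ≫ f = 𝟙 _ := by
  classical
  have hVC : ValuativeCriterion f := by
    have h : (ValuativeCriterion ⊓ @QuasiCompact ⊓ @QuasiSeparated ⊓
        @LocallyOfFiniteType) f := by
      rw [← IsProper.eq_valuativeCriterion]
      infer_instance
    exact h.1.1.1
  have hexist := hVC.existence
  haveI : IsDomain ↥(CommRingCat.of R) := inferInstanceAs (IsDomain R)
  obtain ⟨y, hy, hbij⟩ := hcd (genericPoint (Spec (CommRingCat.of R)))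
  letI : Field ↥((Spec (CommRingCat.of R)).presheaf.stalk
      (genericPoint (Spec (CommRingCat.of R)))) :=
    inferInstanceAs (Field (Spec (CommRingCat.of R)).functionField)
  have hres : Function.Bijective
      ((Spec (CommRingCat.of R)).residue (genericPoint (Spec (CommRingCat.of R)))) :=
    ⟨RingHom.injective _, Scheme.residue_surjective _ _⟩
  haveI h1 : IsIso ((Spec (CommRingCat.of R)).residue
      (genericPoint (Spec (CommRingCat.of R)))) := by
    rw [ConcreteCategory.isIso_iff_bijective]; exact hres
  haveI h2 : IsIso (f.residueFieldMap y) := by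
    rw [ConcreteCategory.isIso_iff_bijective]; exact hbij
  let K := FractionRing R
  letI : Algebra R ↥((Spec (CommRingCat.of R)).functionField) :=
    @instAlgebraCarrierFunctionFieldSpec (CommRingCat.of R) _
  haveI : IsFractionRing R ↥((Spec (CommRingCat.of R)).functionField) :=
    @functionField_isFractionRing_of_affine (CommRingCat.of R) _
  let e : K ≃ₐ[R] (Spec (CommRingCat.of R)).functionField :=
    IsLocalization.algEquiv (nonZeroDivisors R) K (Spec (CommRingCat.of R)).functionField
  let q : Y.residueField y ⟶ CommRingCat.of K :=
    inv (((Spec (CommRingCat.of R)).residueFieldCongr hy.symm).hom ≫ f.residueFieldMap y) ≫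
      inv ((Spec (CommRingCat.of R)).residue (genericPoint (Spec (CommRingCat.of R)))) ≫
        CommRingCat.ofHom e.symm.toRingEquiv.toRingHom
  have hcomm : (Spec.map q ≫ Y.fromSpecResidueField y) ≫ f =
      Spec.map (CommRingCat.ofHom (algebraMap R K)) ≫ 𝟙 (Spec (CommRingCat.of R)) := by
    rw [Category.comp_id, Category.assoc,
      ← Scheme.Hom.SpecMap_residueFieldMap_fromSpecResidueField,
      ← Scheme.residueFieldCongr_fromSpecResidueField hy.symm]
    have hfs : (Spec (CommRingCat.of R)).fromSpecResidueField
        (genericPoint (Spec (CommRingCat.of R))) =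
        Spec.map ((Spec (CommRingCat.of R)).residue (genericPoint (Spec (CommRingCat.of R)))) ≫
          (Spec (CommRingCat.of R)).fromSpecStalk
            (genericPoint (Spec (CommRingCat.of R))) := rfl
    rw [hfs, Spec.fromSpecStalk_eq]
    rw [← Spec.map_comp, ← Spec.map_comp, ← Spec.map_comp, ← Spec.map_comp]
    congr 1
    simp only [q, Category.assoc, IsIso.inv_comp, IsIso.hom_inv_id_assoc]
    ext r
    erw [IsIso.hom_inv_id_assoc]; exact e.symm.commutes r
  let S : ValuativeCommSq f :=
    { R := R, K := K, i₁ := Spec.map q ≫ Y.fromSpecResidueField y,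
      i₂ := 𝟙 (Spec (CommRingCat.of R)), commSq := ⟨hcomm⟩ }
  obtain ⟨⟨l, hl₁, hl₂⟩⟩ := (hexist S).exists_lift
  exact ⟨l, hl₂⟩
end
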